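/- arXiv:2104.06263 — 2 statements merged into one kernel-verified Lean document; each statement's English description precedes it below -/
import Mathlib

section
/- For every nonzero rational number r, tanh(r) is irrational. -/
open Polynomial Real intervalIntegral

private lemma hasDerivAt_poly_exp (p : ℝ[X]) (c x : ℝ) :
    HasDerivAt (fun y : ℝ => p.eval y * Real.exp (c * y))
      (p.derivative.eval x * Real.exp (c * x) + p.eval x * (c * Real.exp (c * x))) x := by
  have h1 : HasDerivAt (fun y : ℝ => p.eval y) (p.derivative.eval x) x := p.hasDerivAt x
  have h2 : HasDerivAt (fun y : ℝ => Real.exp (c * y)) (Real.exp (c * x) * c) x := by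
    have := (Real.hasDerivAt_exp (c * x)).comp x ((hasDerivAt_id x).const_mul c)
    simpa [Function.comp_def] using this
  have := h1.mul h2
  exact this.congr_deriv (by ring)

private lemma cont_poly_exp (p : ℝ[X]) (c : ℝ) :
    Continuous (fun y : ℝ => p.eval y * Real.exp (c * y)) := by
  have : Continuous fun y : ℝ => p.eval y := p.continuous
  exact this.mul (Real.continuous_exp.comp (continuous_const.mul continuous_id))

private lemma intable (p : ℝ[X]) (c : ℝ) :
    IntervalIntegrable (fun y : ℝ => p.eval y * Real.exp (c * y)) MeasureTheory.volume 0 1 :=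
  (cont_poly_exp p c).intervalIntegrable 0 1

private lemma integral_poly_exp_step (p : ℝ[X]) (c : ℝ) (hc : c ≠ 0) :
    ∫ x in (0:ℝ)..1, p.eval x * Real.exp (c * x) =
      (p.eval 1 * Real.exp c - p.eval 0) / c
        - (1 / c) * ∫ x in (0:ℝ)..1, p.derivative.eval x * Real.exp (c * x) := by
  have key : ∫ x in (0:ℝ)..1,
      (p.derivative.eval x * Real.exp (c * x) + p.eval x * (c * Real.exp (c * x)))
      = p.eval 1 * Real.exp (c * 1) - p.eval 0 * Real.exp (c * 0) := by
    apply intervalIntegral.integral_eq_sub_of_hasDerivAt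
      (f := fun y : ℝ => p.eval y * Real.exp (c * y))
    · intro x _
      exact hasDerivAt_poly_exp p c x
    · apply Continuous.intervalIntegrable
      have h1 := cont_poly_exp p.derivative c
      have h2 := cont_poly_exp p c
      exact h1.add (((continuous_const (y := c)).mul h2).congr (fun x => by simp only [Pi.mul_apply]; ring) : Continuous
        fun y : ℝ => p.eval y * (c * Real.exp (c * y)))
  rw [intervalIntegral.integral_add ((intable p.derivative c))] at key
  · have h3 : (∫ x in (0:ℝ)..1, p.eval x * (c * Real.exp (c * x)))
        = c * ∫ x in (0:ℝ)..1, p.eval x * Real.exp (c * x) := by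
      rw [← intervalIntegral.integral_const_mul]
      congr 1; ext x; ring
    rw [h3] at key
    field_simp at key ⊢
    rw [mul_comm] at key
    simp only [mul_zero, Real.exp_zero, mul_one] at key
    linarith [key]
  · have h2 := cont_poly_exp p c
    apply Continuous.intervalIntegrable
    exact ((continuous_const (y := c)).mul h2).congr (fun x => by simp only [Pi.mul_apply]; ring)

private lemma eval_map_int (p : ℤ[X]) (k : ℤ) :
    (p.map (Int.castRingHom ℝ)).eval ((k : ℤ) : ℝ) = ((p.eval k : ℤ) : ℝ) := by
  rw [Polynomial.eval_map, Polynomial.eval₂_at_intCast]; simp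

/-- Main induction: the integral is (a·eᶜ + b)/mʲ⁺¹ with a,b divisible by N. -/
private lemma key_induction (m N : ℕ) (hm : 0 < m) : ∀ j : ℕ, ∀ p : ℤ[X], p.natDegree ≤ j →
    (∀ k : ℕ, (N:ℤ) ∣ (Polynomial.derivative^[k] p).eval 0 ∧
      (N:ℤ) ∣ (Polynomial.derivative^[k] p).eval 1) →
    ∃ a b : ℤ, (N:ℤ) ∣ a ∧ (N:ℤ) ∣ b ∧
      (∫ x in (0:ℝ)..1, (p.map (Int.castRingHom ℝ)).eval x * Real.exp (m * x))
        = ((a : ℝ) * Real.exp m + b) / (m:ℝ) ^ (j+1) := by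
  have hm0 : (m:ℝ) ≠ 0 := Nat.cast_ne_zero.mpr hm.ne'
  have heval1 : ∀ q : ℤ[X], (q.map (Int.castRingHom ℝ)).eval 1 = ((q.eval 1 : ℤ) : ℝ) := by
    intro q; simpa using eval_map_int q 1
  have heval0 : ∀ q : ℤ[X], (q.map (Int.castRingHom ℝ)).eval 0 = ((q.eval 0 : ℤ) : ℝ) := by
    intro q; simpa using eval_map_int q 0
  intro j
  induction j with
  | zero =>
    intro p hdeg hdiv
    refine ⟨p.eval 1, -p.eval 0, (hdiv 0).2, (hdiv 0).1.neg_right, ?_⟩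
    have hstep := integral_poly_exp_step (p.map (Int.castRingHom ℝ)) m hm0
    have hd : p.derivative = 0 := by
      have hc : p = Polynomial.C (p.coeff 0) := Polynomial.eq_C_of_natDegree_le_zero hdeg
      rw [hc]; simp
    rw [Polynomial.derivative_map, hd] at hstep
    simp only [Polynomial.map_zero, Polynomial.eval_zero, zero_mul,
      intervalIntegral.integral_zero, mul_zero, sub_zero] at hstep
    rw [hstep, heval1, heval0]
    push_cast
    ring
  | succ j ih =>
    intro p hdeg hdiv
    have hdiv' : ∀ k : ℕ, (N:ℤ) ∣ (Polynomial.derivative^[k] p.derivative).eval 0 ∧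
        (N:ℤ) ∣ (Polynomial.derivative^[k] p.derivative).eval 1 := by
      intro k
      have := hdiv (k+1)
      rwa [Function.iterate_succ_apply] at this
    have hdeg' : p.derivative.natDegree ≤ j :=
      (Polynomial.natDegree_derivative_le p).trans (Nat.pred_le_pred hdeg)
    obtain ⟨a, b, ha, hb, hint⟩ := ih p.derivative hdeg' hdiv'
    refine ⟨(m:ℤ)^(j+1) * p.eval 1 - a, -((m:ℤ)^(j+1) * p.eval 0) - b, ?_, ?_, ?_⟩
    · exact dvd_sub (Dvd.dvd.mul_left (hdiv 0).2 _) ha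
    · exact dvd_sub (Dvd.dvd.neg_right (Dvd.dvd.mul_left (hdiv 0).1 _)) hb
    · have hstep := integral_poly_exp_step (p.map (Int.castRingHom ℝ)) m hm0
      rw [Polynomial.derivative_map] at hstep
      rw [hstep, hint, heval1, heval0]
      have hmp : (m:ℝ) ^ (j+1) ≠ 0 := pow_ne_zero _ hm0
      field_simp
      push_cast
      ring

private lemma niven_div (n : ℕ) :
    ∀ k : ℕ, ((n.factorial : ℤ)) ∣ (Polynomial.derivative^[k] ((X * (1 - X))^n : ℤ[X])).eval 0 ∧
      ((n.factorial : ℤ)) ∣ (Polynomial.derivative^[k] ((X * (1 - X))^n : ℤ[X])).eval 1 := by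
  set p : ℤ[X] := (X * (1 - X))^n with hp
  have h0 : ∀ k : ℕ, ((n.factorial : ℤ)) ∣ (Polynomial.derivative^[k] p).eval 0 := by
    intro k
    rw [← Polynomial.coeff_zero_eq_eval_zero, Polynomial.coeff_iterate_derivative]
    simp only [zero_add, Nat.descFactorial_self, nsmul_eq_mul]
    rcases lt_or_ge k n with hk | hk
    · have hdvd : (X:ℤ[X])^n ∣ p := by
        rw [hp, mul_pow]; exact dvd_mul_right _ _
      rw [Polynomial.X_pow_dvd_iff.mp hdvd k hk, mul_zero]
      exact dvd_zero _
    · exact Dvd.dvd.mul_right (Int.natCast_dvd_natCast.mpr (Nat.factorial_dvd_factorial hk)) _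
  have hcomp : p.comp (1 - X) = p := by
    rw [hp, Polynomial.pow_comp, Polynomial.mul_comp, Polynomial.X_comp, Polynomial.sub_comp,
      Polynomial.one_comp, Polynomial.X_comp]
    ring_nf
  intro k
  refine ⟨h0 k, ?_⟩
  have h1 : (Polynomial.derivative^[k] p).eval 1
      = (-1)^k * (Polynomial.derivative^[k] p).eval 0 := by
    conv_lhs => rw [← hcomp, Polynomial.iterate_derivative_comp_one_sub_X]
    simp [Polynomial.eval_comp]
  rw [h1]
  exact Dvd.dvd.mul_left (h0 k) _

private lemma exp_nat_irrational (m : ℕ) (hm : 0 < m) : Irrational (Real.exp m) := by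
  rintro ⟨E, hE⟩
  have hm0 : (0:ℝ) < m := Nat.cast_pos.mpr hm
  have hEpos : (0:ℚ) < E := by
    have := Real.exp_pos (m:ℝ)
    rw [← hE] at this
    exact_mod_cast this
  have hden : (0:ℝ) < E.den := Nat.cast_pos.mpr E.pos
  -- choose n
  have htend : Filter.Tendsto
      (fun n : ℕ => (E.den : ℝ) * m * Real.exp m * (((m:ℝ)^2/4)^n / n.factorial))
      Filter.atTop (nhds 0) := by
    have := (FloorSemiring.tendsto_pow_div_factorial_atTop ((m:ℝ)^2/4)).const_mul
      ((E.den : ℝ) * m * Real.exp m)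
    simpa using this
  obtain ⟨n, hn⟩ := (htend.eventually_lt_const (by norm_num : (0:ℝ) < 1)).exists
  -- the polynomial
  set p : ℤ[X] := (X * (1 - X))^n with hp
  have hdeg : p.natDegree ≤ 2 * n := by
    refine Polynomial.natDegree_pow_le.trans ?_
    rw [mul_comm]
    gcongr
    refine Polynomial.natDegree_mul_le.trans ?_
    have h1 : (Polynomial.X : ℤ[X]).natDegree ≤ 1 := Polynomial.natDegree_X_le
    have h2 : ((1 - Polynomial.X : ℤ[X])).natDegree ≤ 1 := by
      refine (Polynomial.natDegree_sub_le _ _).trans ?_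
      simp [Polynomial.natDegree_X_le]
    omega
  obtain ⟨a, b, ha, hb, hint⟩ := key_induction m n.factorial hm (2*n) p hdeg (niven_div n)
  set I : ℝ := ∫ x in (0:ℝ)..1, (x * (1 - x))^n * Real.exp (m * x) with hI
  have hmap : ∀ x : ℝ, (p.map (Int.castRingHom ℝ)).eval x = (x * (1 - x))^n := by
    intro x; simp [hp]
  have hIeq : (∫ x in (0:ℝ)..1, (p.map (Int.castRingHom ℝ)).eval x * Real.exp (m * x)) = I := by
    rw [hI]
    congr 1
    funext x
    rw [hmap]
  rw [hIeq] at hint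
  have hcont : Continuous (fun x : ℝ => (x * (1 - x))^n * Real.exp ((m:ℝ) * x)) := by
    continuity
  have hIpos : 0 < I := by
    rw [hI]
    apply intervalIntegral.intervalIntegral_pos_of_pos_on
      (hcont.intervalIntegrable 0 1)
    · intro x hx
      exact mul_pos (pow_pos (mul_pos hx.1 (by linarith [hx.2])) n) (Real.exp_pos _)
    · norm_num
  have hIle : I ≤ (1/4:ℝ)^n * Real.exp m := by
    have hb1 : I ≤ ∫ _x in (0:ℝ)..1, (1/4:ℝ)^n * Real.exp m := by
      apply intervalIntegral.integral_mono_on (by norm_num)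
        (hcont.intervalIntegrable 0 1)
        (intervalIntegrable_const)
      intro x hx
      have h1 : x * (1 - x) ≤ 1/4 := by nlinarith [sq_nonneg (2*x-1), hx.1, hx.2]
      have h2 : (x * (1 - x))^n ≤ (1/4:ℝ)^n :=
        pow_le_pow_left₀ (mul_nonneg hx.1 (by linarith [hx.2])) h1 n
      have h3 : Real.exp ((m:ℝ) * x) ≤ Real.exp m := by
        apply Real.exp_le_exp.mpr
        nlinarith [hx.1, hx.2, hm0]
      exact mul_le_mul h2 h3 (Real.exp_pos _).le (by positivity)
    simpa using hb1
  -- the integer J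
  set J : ℤ := a * E.num + b * E.den with hJ
  have hEr : (E:ℝ) = (E.num : ℝ) / (E.den : ℝ) := by
    rw [Rat.cast_def]
  have hJr : (J:ℝ) = I * (m:ℝ)^(2*n+1) * E.den := by
    have h1 : (a:ℝ) * Real.exp m + b = I * (m:ℝ)^(2*n+1) := by
      rw [hint]
      field_simp
    rw [← h1, ← hE, hEr, hJ]
    push_cast
    field_simp
  have hJpos : 0 < J := by
    have : (0:ℝ) < (J:ℝ) := by
      rw [hJr]
      positivity
    exact_mod_cast this
  have hJdvd : (n.factorial : ℤ) ∣ J := dvd_add (ha.mul_right _) (hb.mul_right _)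
  have hJge : (n.factorial : ℤ) ≤ J := Int.le_of_dvd hJpos hJdvd
  have hfacR : (n.factorial : ℝ) ≤ (J:ℝ) := by exact_mod_cast hJge
  have hfacpos : (0:ℝ) < n.factorial := by positivity
  have hpow : ((m:ℝ)^2/4)^n = (m:ℝ)^(2*n) * (1/4:ℝ)^n := by
    rw [div_pow, ← pow_mul]
    ring_nf
    rw [one_div]
  have hfinal : (J:ℝ) < (n.factorial : ℝ) := by
    have hn' : (E.den : ℝ) * m * Real.exp m * ((m:ℝ)^2/4)^n < n.factorial := by
      rw [← mul_div_assoc, div_lt_one hfacpos] at hn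
      linarith [hn]
    calc (J:ℝ) = I * (m:ℝ)^(2*n+1) * E.den := hJr
      _ ≤ ((1/4:ℝ)^n * Real.exp m) * (m:ℝ)^(2*n+1) * E.den := by
          gcongr
      _ = (E.den : ℝ) * m * Real.exp m * ((m:ℝ)^2/4)^n := by
          rw [hpow, pow_succ, pow_mul]
          ring_nf
      _ < n.factorial := hn'
  linarith

private lemma exp_int_irrational (z : ℤ) (hz : z ≠ 0) : Irrational (Real.exp z) := by
  rcases lt_or_gt_of_ne hz with h | h
  · have h1 : Irrational (Real.exp ((-z).toNat)) := by
      apply exp_nat_irrational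
      omega
    have h2 : ((((-z).toNat : ℕ)) : ℝ) = -(z:ℝ) := by
      have h3 : ((-z).toNat : ℤ) = -z := Int.toNat_of_nonneg (by omega)
      exact_mod_cast congrArg (Int.cast : ℤ → ℝ) h3
    rw [h2] at h1
    have := h1.inv
    rwa [← Real.exp_neg, neg_neg] at this
  · have h1 : Irrational (Real.exp (z.toNat)) := by
      apply exp_nat_irrational
      omega
    have h2 : (((z.toNat : ℕ)) : ℝ) = (z:ℝ) := by
      have h3 : (z.toNat : ℤ) = z := Int.toNat_of_nonneg (by omega)
      exact_mod_cast congrArg (Int.cast : ℤ → ℝ) h3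
    rwa [h2] at h1

theorem tanh_nonzero_rat_irrational (r : ℚ) (hr : r ≠ 0) :
    Irrational (Real.tanh (r : ℝ)) := by
  rintro ⟨s, hs⟩
  set t : ℝ := (r : ℝ) with ht
  -- derive exp (2t) in terms of s
  have hcosh : Real.cosh t > 0 := Real.cosh_pos t
  have heq : (s:ℝ) * Real.cosh t = Real.sinh t := by
    rw [hs, Real.tanh_eq_sinh_div_cosh]
    field_simp
  have hexp : Real.exp (2*t) * (1 - (s:ℝ)) = 1 + (s:ℝ) := by
    have h1 : Real.exp t * Real.exp t = Real.exp (2*t) := by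
      rw [← Real.exp_add]; ring_nf
    have h2 : Real.exp (-t) * Real.exp t = 1 := by
      rw [← Real.exp_add]; simp
    rw [Real.cosh_eq, Real.sinh_eq] at heq
    linear_combination (-2*Real.exp t) * heq + ((s:ℝ) - 1) * h1 + (1 + (s:ℝ)) * h2
  have hs1 : (s:ℝ) ≠ 1 := by
    intro hcon
    rw [hcon] at hexp
    have := Real.exp_pos (2*t)
    norm_num at hexp
  have hsq : (1:ℚ) - s ≠ 0 := by
    intro hcon
    apply hs1
    have h4 : (s:ℚ) = 1 := by linarith [hcon]
    exact_mod_cast h4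
  set u : ℚ := (1 + s) / (1 - s) with hu
  have hexpu : Real.exp (2*t) = (u : ℝ) := by
    rw [hu]
    push_cast
    rw [eq_div_iff (sub_ne_zero.mpr (fun hc => hs1 hc.symm))]
    linarith [hexp]
  -- now exponentiate to clear denominators
  set q : ℚ := 2 * r with hq
  have hq0 : q ≠ 0 := by simp [hq, hr]
  have hqt : ((q:ℚ):ℝ) = 2*t := by rw [hq, ht]; push_cast; ring
  have hnum : Real.exp ((q.num : ℤ) : ℝ) = ((u ^ q.den : ℚ) : ℝ) := by
    have h1 : ((q.num : ℤ) : ℝ) = (q.den : ℝ) * (2*t) := by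
      rw [← hqt]
      have : (q.den : ℚ) * q = (q.num : ℚ) := Rat.den_mul_eq_num q
      exact_mod_cast (congrArg (Rat.cast : ℚ → ℝ) this).symm
    rw [h1, Real.exp_nat_mul, hexpu]
    push_cast
    ring
  have hirr := exp_int_irrational q.num (Rat.num_ne_zero.mpr hq0)
  exact hirr ⟨u ^ q.den, hnum.symm⟩
end

section
/- For every nonzero rational number r, tan(r) is irrational. -/
/- Machinery copied/adapted from Mathlib.Data.Real.Pi.Irrational (all declarations there are
private), then used to prove Lambert's theorem: tan r is irrational for rational r ≠ 0. -/

noncomputable section TanIrrationalAux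

open intervalIntegral MeasureTheory.MeasureSpace Set Polynomial Real
open scoped Nat

private def II (n : ℕ) (θ : ℝ) : ℝ := ∫ x in (-1)..1, (1 - x ^ 2) ^ n * cos (x * θ)

variable {n : ℕ} {θ : ℝ}

private lemma II_zero : II 0 θ * θ = 2 * sin θ := by
  rw [mul_comm, II]
  simp [mul_integral_comp_mul_right, two_mul]

private lemma II_recursion' (n : ℕ) :
    II (n + 1) θ * θ ^ 2 = - (2 * 2 * ((n + 1) * (0 ^ n * cos θ))) +
      2 * (n + 1) * (2 * n + 1) * II n θ - 4 * (n + 1) * n * II (n - 1) θ := by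
  rw [II]
  let f (x : ℝ) : ℝ := 1 - x ^ 2
  let u₁ (x : ℝ) : ℝ := f x ^ (n + 1)
  let u₁' (x : ℝ) : ℝ := - (2 * (n + 1) * x * f x ^ n)
  let v₁ (x : ℝ) : ℝ := sin (x * θ)
  let v₁' (x : ℝ) : ℝ := cos (x * θ) * θ
  let u₂ (x : ℝ) : ℝ := x * (f x) ^ n
  let u₂' (x : ℝ) : ℝ := (f x) ^ n - 2 * n * x ^ 2 * (f x) ^ (n - 1)
  let v₂ (x : ℝ) : ℝ := cos (x * θ)
  let v₂' (x : ℝ) : ℝ := -sin (x * θ) * θ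
  have hfd : Continuous f := by fun_prop
  have hu₁d : Continuous u₁' := by fun_prop
  have hv₁d : Continuous v₁' := by fun_prop
  have hu₂d : Continuous u₂' := by fun_prop
  have hv₂d : Continuous v₂' := by fun_prop
  have hu₁_eval_one : u₁ 1 = 0 := by simp only [u₁, f]; simp
  have hu₁_eval_neg_one : u₁ (-1) = 0 := by simp only [u₁, f]; simp
  have t : u₂ 1 * v₂ 1 - u₂ (-1) * v₂ (-1) = 2 * (0 ^ n * cos θ) := by simp [u₂, v₂, f, ← two_mul]
  have hf (x) : HasDerivAt f (- 2 * x) x := by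
    convert! (hasDerivAt_pow 2 x).const_sub 1 using 1
    simp
  have hu₁ (x) : HasDerivAt u₁ (u₁' x) x := by
    convert! (hf x).pow _ using 1
    simp only [Nat.add_succ_sub_one, u₁', Nat.cast_add_one]
    ring
  have hv₁ (x) : HasDerivAt v₁ (v₁' x) x := (hasDerivAt_mul_const θ).sin
  have hu₂ (x) : HasDerivAt u₂ (u₂' x) x := by
    convert! (hasDerivAt_id' x).fun_mul ((hf x).fun_pow _) using 1
    simp only [u₂']
    ring
  have hv₂ (x) : HasDerivAt v₂ (v₂' x) x := (hasDerivAt_mul_const θ).cos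
  convert_to (∫ (x : ℝ) in (-1)..1, u₁ x * v₁' x) * θ = _ using 1
  · simp_rw [u₁, v₁', f, ← intervalIntegral.integral_mul_const, sq θ, mul_assoc]
  rw [integral_mul_deriv_eq_deriv_mul (fun x _ => hu₁ x) (fun x _ => hv₁ x)
    (hu₁d.intervalIntegrable _ _) (hv₁d.intervalIntegrable _ _), hu₁_eval_one, hu₁_eval_neg_one,
    zero_mul, zero_mul, sub_zero, zero_sub, ← integral_neg, ← integral_mul_const]
  convert_to ((-2 : ℝ) * (n + 1)) * ∫ (x : ℝ) in (-1)..1, (u₂ x * v₂' x) = _ using 1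
  · rw [← integral_const_mul]
    congr 1 with x
    dsimp [u₁', v₁, u₂, v₂']
    ring
  rw [integral_mul_deriv_eq_deriv_mul (fun x _ => hu₂ x) (fun x _ => hv₂ x)
    (hu₂d.intervalIntegrable _ _) (hv₂d.intervalIntegrable _ _),
    mul_sub, t, neg_mul, neg_mul, neg_mul, sub_neg_eq_add]
  have (x : _) : u₂' x = (2 * n + 1) * f x ^ n - 2 * n * f x ^ (n - 1) := by
    cases n with
    | zero => simp [u₂']
    | succ n => ring!
  simp_rw [this, sub_mul, mul_assoc _ _ (v₂ _)]
  have : Continuous v₂ := by fun_prop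
  rw [mul_mul_mul_comm, integral_sub, mul_sub, add_sub_assoc]
  · congr 1
    simp_rw [integral_const_mul]
    ring!
  all_goals exact Continuous.intervalIntegrable (by fun_prop) _ _

private lemma II_recursion (n : ℕ) :
    II (n + 2) θ * θ ^ 2 =
      2 * (n + 2) * (2 * n + 3) * II (n + 1) θ - 4 * (n + 2) * (n + 1) * II n θ := by
  rw [II_recursion' (n + 1)]
  simp
  ring!

private lemma II_one : II 1 θ * θ ^ 3 = 4 * sin θ - 4 * θ * cos θ := by
  rw [_root_.pow_succ, ← mul_assoc, II_recursion' 0, sub_mul, add_mul, mul_assoc _ (II 0 θ),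
    II_zero]
  ring

private def sinPoly' : ℕ → ℤ[X]
  | 0 => C 2
  | 1 => C 4
  | (n+2) => ((2 : ℤ) * (2 * n + 3)) • sinPoly' (n + 1) + monomial 2 (-4) * sinPoly' n

private def cosPoly' : ℕ → ℤ[X]
  | 0 => 0
  | 1 => monomial 1 (-4)
  | (n+2) => ((2 : ℤ) * (2 * n + 3)) • cosPoly' (n + 1) + monomial 2 (-4) * cosPoly' n

private lemma sinPoly'_natDegree_le : ∀ n : ℕ, (sinPoly' n).natDegree ≤ n
  | 0 => by simp [sinPoly']
  | 1 => by simp only [natDegree_C, mul_one, zero_le', sinPoly']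
  | n + 2 => by
      rw [sinPoly']
      refine natDegree_add_le_of_degree_le ((natDegree_smul_le _ _).trans ?_) ?_
      · exact (sinPoly'_natDegree_le (n + 1)).trans (by simp)
      refine natDegree_mul_le.trans ?_
      simpa [add_comm 2] using sinPoly'_natDegree_le n

private lemma cosPoly'_natDegree_le : ∀ n : ℕ, (cosPoly' n).natDegree ≤ n
  | 0 => by simp [cosPoly']
  | 1 => (natDegree_monomial_le _).trans (by simp)
  | n + 2 => by
      rw [cosPoly']
      refine natDegree_add_le_of_degree_le ((natDegree_smul_le _ _).trans ?_) ?_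
      · exact (cosPoly'_natDegree_le (n + 1)).trans (by simp)
      exact natDegree_mul_le.trans (by simp [add_comm 2, cosPoly'_natDegree_le n])

private lemma sinPoly'_add_cosPoly'_eval (θ : ℝ) :
    ∀ n : ℕ,
      II n θ * θ ^ (2 * n + 1) = n ! * ((sinPoly' n).eval₂ (Int.castRingHom _) θ * sin θ +
        (cosPoly' n).eval₂ (Int.castRingHom _) θ * cos θ)
  | 0 => by simp [sinPoly', cosPoly', II_zero]
  | 1 => by simp [II_one, sinPoly', cosPoly', sub_eq_add_neg]
  | n + 2 => by
      calc II (n + 2) θ * θ ^ (2 * (n + 2) + 1) = II (n + 2) θ * θ ^ 2 * θ ^ (2 * n + 3) := by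
            ring
        _ = 2 * (n + 2) * (2 * n + 3) * (II (n + 1) θ * θ ^ (2 * (n + 1) + 1)) -
            4 * (n + 2) * (n + 1) * θ ^ 2 * (II n θ * θ ^ (2 * n + 1)) := by rw [II_recursion]; ring
        _ = _ := by simp [sinPoly'_add_cosPoly'_eval, sinPoly', cosPoly', Nat.factorial_succ]; ring

private lemma is_integer' {p : ℤ[X]} (a b : ℤ) {k : ℕ} (hp : p.natDegree ≤ k) :
    ∃ z : ℤ, p.eval₂ (Int.castRingHom ℝ) (a / b) * b ^ k = z := by
  rcases eq_or_ne b 0 with rfl | hb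
  · rcases k.eq_zero_or_pos with rfl | hk
    · exact ⟨p.coeff 0, by simp⟩
    exact ⟨0, by simp [hk.ne']⟩
  refine ⟨∑ i ∈ p.support, p.coeff i * a ^ i * b ^ (k - i), ?_⟩
  conv => lhs; rw [← sum_monomial_eq p]
  rw [eval₂_sum, sum, Finset.sum_mul, Int.cast_sum]
  simp only [eval₂_monomial, eq_intCast, div_pow, Int.cast_mul, Int.cast_pow]
  refine Finset.sum_congr rfl (fun i hi => ?_)
  have ik := (le_natDegree_of_mem_supp i hi).trans hp
  rw [mul_assoc, div_mul_comm, ← Int.cast_pow, ← Int.cast_pow, ← Int.cast_pow,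
    ← pow_sub_mul_pow b ik, ← Int.cast_div_charZero, Int.mul_ediv_cancel _ (pow_ne_zero _ hb),
    ← mul_assoc, mul_right_comm, ← Int.cast_pow]
  exact dvd_mul_left _ _

open Filter

private lemma abs_II_le (n : ℕ) (θ : ℝ) : |II n θ| ≤ 2 := by
  have : |II n θ| = ‖II n θ‖ := rfl
  rw [this, II]
  have h2 : ‖∫ x in (-1 : ℝ)..1, (1 - x ^ 2) ^ n * cos (x * θ)‖ ≤ 1 * |1 - (-1 : ℝ)| := by
    refine norm_integral_le_of_norm_le_const ?_
    intros x hx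
    simp only [uIoc_of_le, neg_le_self_iff, zero_le_one, mem_Ioc] at hx
    rw [Real.norm_eq_abs, abs_mul, abs_pow]
    refine mul_le_one₀ (pow_le_one₀ (abs_nonneg _) ?_) (abs_nonneg _) (abs_cos_le_one _)
    rw [abs_le]
    constructor <;> nlinarith [hx.1, hx.2]
  calc ‖∫ x in (-1 : ℝ)..1, (1 - x ^ 2) ^ n * cos (x * θ)‖ ≤ 1 * |1 - (-1 : ℝ)| := h2
    _ = 2 := by norm_num

private lemma tendsto_pow_div_factorial_at_top_aux' (a : ℝ) :
    Tendsto (fun n => (a : ℝ) ^ (2 * n + 1) / n !) atTop (nhds 0) := by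
  rw [← mul_zero a]
  refine ((FloorSemiring.tendsto_pow_div_factorial_atTop (a ^ 2)).const_mul a).congr (fun x => ?_)
  rw [← pow_mul, mul_div_assoc', _root_.pow_succ']

/-- The key step: if `c * sin θ + d * cos θ = 0` for integers `c, d` not both zero, and `θ` is
a nonzero rational (as a real), we obtain a contradiction. -/
private lemma no_integer_relation (r : ℚ) (hr : r ≠ 0) (c d : ℤ)
    (hcd : ¬(c = 0 ∧ d = 0))
    (hrel : (c : ℝ) * Real.sin (r : ℝ) + (d : ℝ) * Real.cos (r : ℝ) = 0) : False := by
  set θ : ℝ := (r : ℝ) with hθ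
  have hθ0 : θ ≠ 0 := by
    simpa [hθ] using (Rat.cast_ne_zero (α := ℝ)).2 hr
  -- the orthogonal combination s
  set s : ℝ := (d : ℝ) * Real.sin θ - (c : ℝ) * Real.cos θ with hs
  have hpyth : Real.sin θ ^ 2 + Real.cos θ ^ 2 = 1 := Real.sin_sq_add_cos_sq θ
  have hcd2 : (0 : ℝ) < (c : ℝ) ^ 2 + (d : ℝ) ^ 2 := by
    rcases not_and_or.1 hcd with h | h
    · have : (c : ℝ) ≠ 0 := Int.cast_ne_zero.2 h
      positivity
    · have : (d : ℝ) ≠ 0 := Int.cast_ne_zero.2 h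
      positivity
  have hs2 : s ^ 2 = (c : ℝ) ^ 2 + (d : ℝ) ^ 2 := by
    rw [hs]
    linear_combination (-((c : ℝ) * Real.sin θ + (d : ℝ) * Real.cos θ)) * hrel +
      ((c : ℝ) ^ 2 + (d : ℝ) ^ 2) * hpyth
  have hsne : s ≠ 0 := by
    intro h
    rw [h] at hs2
    simp at hs2
    nlinarith
  have hsin : ((c : ℝ) ^ 2 + (d : ℝ) ^ 2) * Real.sin θ = (d : ℝ) * s := by
    rw [hs]; linear_combination (c : ℝ) * hrel
  have hcos : ((c : ℝ) ^ 2 + (d : ℝ) ^ 2) * Real.cos θ = -((c : ℝ) * s) := by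
    rw [hs]; linear_combination (d : ℝ) * hrel
  -- write θ = a / b
  obtain ⟨a, b, hb, hab⟩ : ∃ (a : ℤ) (b : ℕ), 0 < b ∧ θ = a / b :=
    ⟨r.num, r.den, r.pos, by rw [hθ, Rat.cast_def]⟩
  have ha : a ≠ 0 := by
    intro h
    rw [h] at hab
    simp at hab
    exact hθ0 hab
  -- integer values z n
  have key : ∀ n : ℕ, ∃ z : ℤ,
      (((d : ℝ) * (sinPoly' n).eval₂ (Int.castRingHom ℝ) θ
        - (c : ℝ) * (cosPoly' n).eval₂ (Int.castRingHom ℝ) θ) * (b : ℝ) ^ (2 * n + 1) = z) := by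
    intro n
    obtain ⟨z, hz⟩ := is_integer' a (b : ℤ) (k := 2 * n + 1)
      (p := C d * sinPoly' n - C c * cosPoly' n)
      ((natDegree_sub_le _ _).trans (max_le
        ((natDegree_C_mul_le _ _).trans ((sinPoly'_natDegree_le n).trans (by omega)))
        ((natDegree_C_mul_le _ _).trans ((cosPoly'_natDegree_le n).trans (by omega)))))
    refine ⟨z, ?_⟩
    rw [← hz, hab]
    simp only [eval₂_sub, eval₂_mul, eval₂_C]
    simp only [eq_intCast]
    push_cast
    ring
  choose z hz using key
  -- the main identity
  have main : ∀ n : ℕ, ((c : ℝ) ^ 2 + (d : ℝ) ^ 2) * II n θ * (a : ℝ) ^ (2 * n + 1)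
      = (n ! : ℝ) * s * (z n) := by
    intro n
    have e := sinPoly'_add_cosPoly'_eval θ n
    have hzn := hz n
    clear_value s
    have hbne : (b : ℝ) ≠ 0 := Nat.cast_ne_zero.2 hb.ne'
    have hθb : θ * b = a := by rw [hab]; field_simp
    have hpow : (a : ℝ) ^ (2 * n + 1) = θ ^ (2 * n + 1) * (b : ℝ) ^ (2 * n + 1) := by
      rw [← mul_pow, hθb]
    rw [hpow]
    calc ((c : ℝ) ^ 2 + (d : ℝ) ^ 2) * II n θ * (θ ^ (2 * n + 1) * (b : ℝ) ^ (2 * n + 1))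
        = ((c : ℝ) ^ 2 + (d : ℝ) ^ 2) * (II n θ * θ ^ (2 * n + 1)) * (b : ℝ) ^ (2 * n + 1) := by
          ring
      _ = ((c : ℝ) ^ 2 + (d : ℝ) ^ 2) * ((n ! : ℝ) *
            ((sinPoly' n).eval₂ (Int.castRingHom _) θ * Real.sin θ +
             (cosPoly' n).eval₂ (Int.castRingHom _) θ * Real.cos θ)) * (b : ℝ) ^ (2 * n + 1) := by
          rw [e]
      _ = (n ! : ℝ) * (((sinPoly' n).eval₂ (Int.castRingHom _) θ *
              (((c : ℝ) ^ 2 + (d : ℝ) ^ 2) * Real.sin θ) +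
            (cosPoly' n).eval₂ (Int.castRingHom _) θ *
              (((c : ℝ) ^ 2 + (d : ℝ) ^ 2) * Real.cos θ))) * (b : ℝ) ^ (2 * n + 1) := by
          ring
      _ = (n ! : ℝ) * s * (((d : ℝ) * (sinPoly' n).eval₂ (Int.castRingHom ℝ) θ
            - (c : ℝ) * (cosPoly' n).eval₂ (Int.castRingHom ℝ) θ) * (b : ℝ) ^ (2 * n + 1)) := by
          rw [hsin, hcos]; ring
      _ = (n ! : ℝ) * s * (z n) := by rw [hzn]
  -- z n → 0, so eventually z n = 0, so eventually II n θ = 0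
  have hzero : ∀ᶠ n : ℕ in atTop, II n θ = 0 := by
    have hsabs : (0 : ℝ) < |s| := abs_pos.2 hsne
    have hA2 : (0 : ℝ) < 2 * ((c : ℝ) ^ 2 + (d : ℝ) ^ 2) := by positivity
    have hev : ∀ᶠ n : ℕ in atTop, |(a : ℝ)| ^ (2 * n + 1) / n ! <
        |s| / (2 * ((c : ℝ) ^ 2 + (d : ℝ) ^ 2)) :=
      (tendsto_pow_div_factorial_at_top_aux' |(a : ℝ)|).eventually_lt_const (by positivity)
    filter_upwards [hev] with n hn
    rw [div_lt_div_iff₀ (by positivity) hA2] at hn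
    -- hn : |a| ^ (2n+1) * (2 * A) < |s| * n !
    have habs : ((c : ℝ) ^ 2 + (d : ℝ) ^ 2) * |II n θ| * |(a : ℝ)| ^ (2 * n + 1)
        = (n ! : ℝ) * |s| * |(z n : ℝ)| := by
      have h := congrArg abs (main n)
      rwa [abs_mul, abs_mul, abs_mul, abs_mul, abs_pow, abs_of_pos hcd2, Nat.abs_cast] at h
    have h1 : (n ! : ℝ) * |s| * |(z n : ℝ)| < (n ! : ℝ) * |s| * 1 := by
      rw [← habs]
      calc ((c : ℝ) ^ 2 + (d : ℝ) ^ 2) * |II n θ| * |(a : ℝ)| ^ (2 * n + 1)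
          ≤ ((c : ℝ) ^ 2 + (d : ℝ) ^ 2) * 2 * |(a : ℝ)| ^ (2 * n + 1) :=
            mul_le_mul_of_nonneg_right
              (mul_le_mul_of_nonneg_left (abs_II_le n θ) hcd2.le) (by positivity)
        _ < (n ! : ℝ) * |s| * 1 := by nlinarith [hn]
    have hbound : |(z n : ℝ)| < 1 := lt_of_mul_lt_mul_left h1 (by positivity)
    have hz0 : z n = 0 := by
      rw [← Int.cast_abs] at hbound
      exact Int.abs_lt_one_iff.1 (by exact_mod_cast hbound)
    have hm := main n
    rw [hz0] at hm
    simp only [Int.cast_zero, mul_zero] at hm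
    rcases mul_eq_zero.1 hm with h | h
    · rcases mul_eq_zero.1 h with h | h
      · exact absurd h hcd2.ne'
      · exact h
    · exact absurd h (pow_ne_zero _ (Int.cast_ne_zero.2 ha))
  -- downward recursion: II n θ = 0 for all n
  obtain ⟨N, hN⟩ := eventually_atTop.1 hzero
  have hall : ∀ j : ℕ, ∀ m : ℕ, N ≤ m + j → II m θ = 0 := by
    intro j
    induction j with
    | zero => intro m hm; exact hN m (by omega)
    | succ j ih =>
        intro m hm
        by_cases hmj : N ≤ m + j
        · exact ih m hmj
        · have h1 : II (m + 1) θ = 0 := ih (m + 1) (by omega)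
          have h2 : II (m + 2) θ = 0 := ih (m + 2) (by omega)
          have hrec := II_recursion (θ := θ) m
          rw [h1, h2] at hrec
          have : (4 : ℝ) * (m + 2) * (m + 1) * II m θ = 0 := by linarith
          have hcoef : (4 : ℝ) * (m + 2) * (m + 1) ≠ 0 := by positivity
          exact (mul_eq_zero.1 this).resolve_left hcoef
  have h0 : II 0 θ = 0 := hall N 0 (by omega)
  have h1 : II 1 θ = 0 := hall N 1 (by omega)
  have hsin0 : Real.sin θ = 0 := by
    have := II_zero (θ := θ)
    rw [h0, zero_mul] at this
    linarith
  have hcos0 : Real.cos θ = 0 := by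
    have := II_one (θ := θ)
    rw [h1, zero_mul, hsin0] at this
    have h4 : (4 : ℝ) * θ * Real.cos θ = 0 := by linarith
    rcases mul_eq_zero.1 h4 with h | h
    · rcases mul_eq_zero.1 h with h | h
      · norm_num at h
      · exact absurd h hθ0
    · exact h
  rw [hsin0, hcos0] at hpyth
  norm_num at hpyth

end TanIrrationalAux

theorem tan_nonzero_rat_irrational (r : ℚ) (hr : r ≠ 0) :
    Irrational (Real.tan (r : ℝ)) := by
  by_contra h
  rw [Irrational, not_not, Set.mem_range] at h
  obtain ⟨q, hq⟩ := h
  by_cases hc : Real.cos (r : ℝ) = 0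
  · exact no_integer_relation r hr 0 1 (by simp) (by simp [hc])
  · have htan : Real.tan (r : ℝ) = Real.sin (r : ℝ) / Real.cos (r : ℝ) :=
      Real.tan_eq_sin_div_cos _
    have hsin : Real.sin (r : ℝ) = (q : ℝ) * Real.cos (r : ℝ) := by
      rw [← hq] at htan
      field_simp at htan
      linarith
    refine no_integer_relation r hr (q.den : ℤ) (-q.num) (fun hcd => ?_) ?_
    · exact q.den_nz (by exact_mod_cast hcd.1)
    · have hden : ((q.den : ℝ)) * (q : ℝ) = (q.num : ℝ) := by
        rw [Rat.cast_def]
        field_simp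
      push_cast
      rw [hsin]
      linear_combination Real.cos (r : ℝ) * hden
end
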